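/- If S is the numerical semigroup generated by two coprime integers p and q with 1 < p < q, then the number of gaps (nonnegative integers not in S) equals (p-1)(q-1)/2. -/
import Mathlib

lemma exists_canon (p q : ℕ) (hq : 1 < q) (hcop : Nat.Coprime p q) (n : ℤ) :
    ∃ a b : ℤ, 0 ≤ a ∧ a < q ∧ n = a * p + b * q := by
  haveI : NeZero q := ⟨by omega⟩
  have hunit : IsUnit (p : ZMod q) := (ZMod.isUnit_iff_coprime p q).mpr hcop
  set x : ZMod q := (n : ZMod q) * (hunit.unit⁻¹ : (ZMod q)ˣ) with hx
  have hdvd : (q : ℤ) ∣ n - x.val * p := by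
    have h0 : ((n - x.val * p : ℤ) : ZMod q) = 0 := by
      push_cast
      rw [ZMod.natCast_val x, ZMod.cast_id, hx, mul_assoc, IsUnit.val_inv_mul]
      ring
    exact (ZMod.intCast_zmod_eq_zero_iff_dvd _ q).mp h0
  refine ⟨x.val, (n - x.val * p) / q, by positivity, ?_, ?_⟩
  · exact_mod_cast ZMod.val_lt x
  · rw [Int.ediv_mul_cancel hdvd]; ring

def RepZ (p q : ℕ) (n : ℤ) : Prop := ∃ a b : ℤ, 0 ≤ a ∧ 0 ≤ b ∧ n = a * p + b * q

lemma not_both (p q : ℕ) (hp : 1 < p) (hpq : p < q) (hcop : Nat.Coprime p q) (n : ℤ)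
    (h1 : RepZ p q n) (h2 : RepZ p q ((p : ℤ) * q - p - q - n)) : False := by
  obtain ⟨a, b, ha, hb, hab⟩ := h1
  obtain ⟨c, d, hc, hd, hcd⟩ := h2
  have key : (p : ℤ) * q = (a + c + 1) * p + (b + d + 1) * q := by linarith
  have hqp : IsCoprime (q : ℤ) (p : ℤ) := by
    exact_mod_cast Nat.isCoprime_iff_coprime.mpr hcop.symm
  have hpq' : IsCoprime (p : ℤ) (q : ℤ) := by
    exact_mod_cast Nat.isCoprime_iff_coprime.mpr hcop
  have hqA : (q : ℤ) ∣ (a + c + 1) := by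
    have : (q : ℤ) ∣ (a + c + 1) * p := ⟨p - (b + d + 1), by linarith⟩
    exact hqp.dvd_of_dvd_mul_right this
  have hpB : (p : ℤ) ∣ (b + d + 1) := by
    have : (p : ℤ) ∣ (b + d + 1) * q := ⟨q - (a + c + 1), by linarith⟩
    exact hpq'.dvd_of_dvd_mul_right this
  have hA : (q : ℤ) ≤ a + c + 1 := Int.le_of_dvd (by linarith) hqA
  have hB : (p : ℤ) ≤ b + d + 1 := Int.le_of_dvd (by linarith) hpB
  have hp' : (1 : ℤ) < p := by exact_mod_cast hp
  have hq' : (1 : ℤ) < q := by exact_mod_cast hpq.trans' hp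
  nlinarith [mul_le_mul hA hp'.le (by linarith) (by linarith : (0:ℤ) ≤ a + c + 1),
    mul_le_mul hB hq'.le (by linarith) (by linarith : (0:ℤ) ≤ b + d + 1)]

lemma sym (p q : ℕ) (hp : 1 < p) (hpq : p < q) (hcop : Nat.Coprime p q) (n : ℤ)
    (h : ¬ RepZ p q n) : RepZ p q ((p : ℤ) * q - p - q - n) := by
  obtain ⟨a, b, ha, haq, hab⟩ := exists_canon p q (by omega) hcop n
  have hb : b < 0 := by
    by_contra hb
    exact h ⟨a, b, ha, by omega, hab⟩
  exact ⟨q - 1 - a, -1 - b, by omega, by omega, by linarith⟩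

lemma repZ_iff (p q : ℕ) (n : ℕ) : (∃ a b : ℕ, n = a * p + b * q) ↔ RepZ p q n := by
  constructor
  · rintro ⟨a, b, rfl⟩
    exact ⟨a, b, by positivity, by positivity, by push_cast; ring⟩
  · rintro ⟨a, b, ha, hb, hab⟩
    refine ⟨a.toNat, b.toNat, ?_⟩
    have : (n : ℤ) = (a.toNat * p + b.toNat * q : ℕ) := by
      push_cast [Int.toNat_of_nonneg ha, Int.toNat_of_nonneg hb]; exact hab
    exact_mod_cast this

lemma rep_large (p q : ℕ) (hp : 1 < p) (hpq : p < q) (hcop : Nat.Coprime p q) (n : ℕ)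
    (hn : (p - 1) * (q - 1) ≤ n) : ∃ a b : ℕ, n = a * p + b * q := by
  rw [repZ_iff]
  obtain ⟨a, b, ha, haq, hab⟩ := exists_canon p q (by omega) hcop n
  refine ⟨a, b, ha, ?_, hab⟩
  by_contra hb
  have hM : ((p - 1) * (q - 1) : ℕ) = ((p : ℤ) - 1) * ((q : ℤ) - 1) := by
    push_cast [Nat.cast_sub (by omega : 1 ≤ p), Nat.cast_sub (by omega : 1 ≤ q)]; ring
  have hn' : ((p : ℤ) - 1) * ((q : ℤ) - 1) ≤ n := by
    rw [← hM]; exact_mod_cast hn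
  have hp' : (1 : ℤ) < p := by exact_mod_cast hp
  nlinarith [mul_le_mul (by omega : a ≤ (q:ℤ) - 1) hp'.le (by linarith) (by omega : (0:ℤ) ≤ (q:ℤ)-1)]

theorem card_gaps_of_two_generated_semigroup
    (p q : ℕ) (hp : 1 < p) (hpq : p < q) (hcop : Nat.Coprime p q) :
    Set.ncard {n : ℕ | ¬ ∃ a b : ℕ, n = a * p + b * q} = (p - 1) * (q - 1) / 2 := by
  classical
  set M := (p - 1) * (q - 1) with hM
  have hMpos : 0 < M := by
    apply Nat.mul_pos <;> omega
  set F : Finset ℕ := (Finset.range M).filter (fun n => ¬ ∃ a b : ℕ, n = a * p + b * q) with hF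
  have hset : {n : ℕ | ¬ ∃ a b : ℕ, n = a * p + b * q} = ↑F := by
    ext n
    simp only [hF, Finset.coe_filter, Finset.mem_range, Set.mem_setOf_eq]
    constructor
    · intro h
      refine ⟨?_, h⟩
      by_contra hn
      exact h (rep_large p q hp hpq hcop n (by omega))
    · exact fun h => h.2
  rw [hset, Set.ncard_coe_finset]
  -- key cast fact: for n < M, the ℤ value of M - 1 - n is p*q - p - q - n
  have hcast : ∀ n : ℕ, n < M → ((M - 1 - n : ℕ) : ℤ) = (p : ℤ) * q - p - q - n := by
    intro n hn
    have h1 : (M : ℤ) = ((p : ℤ) - 1) * ((q : ℤ) - 1) := by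
      rw [hM]; push_cast [Nat.cast_sub (by omega : 1 ≤ p), Nat.cast_sub (by omega : 1 ≤ q)]; ring
    have : ((M - 1 - n : ℕ) : ℤ) = (M : ℤ) - 1 - n := by omega
    rw [this, h1]; ring
  have key : ∀ n : ℕ, n < M → (¬ (∃ a b : ℕ, n = a * p + b * q)) →
      (M - 1 - n < M ∧ ∃ a b : ℕ, M - 1 - n = a * p + b * q) := by
    intro n hn h
    refine ⟨by omega, ?_⟩
    rw [repZ_iff] at h ⊢
    rw [hcast n hn]
    exact sym p q hp hpq hcop n h
  have key2 : ∀ n : ℕ, n < M → (∃ a b : ℕ, n = a * p + b * q) →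
      ¬ ∃ a b : ℕ, M - 1 - n = a * p + b * q := by
    intro n hn h hcontra
    rw [repZ_iff] at h hcontra
    rw [hcast n hn] at hcontra
    exact not_both p q hp hpq hcop n h hcontra
  have hbij : F.card = ((Finset.range M).filter (fun n => ∃ a b : ℕ, n = a * p + b * q)).card := by
    apply Finset.card_bij' (fun n _ => M - 1 - n) (fun n _ => M - 1 - n)
    · intro n hn
      simp only [hF, Finset.mem_filter, Finset.mem_range] at hn ⊢
      obtain ⟨h1, h2⟩ := (key n hn.1 hn.2)
      exact ⟨h1, h2⟩
    · intro n hn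
      simp only [Finset.mem_filter, Finset.mem_range, hF] at hn ⊢
      exact ⟨by omega, key2 n hn.1 hn.2⟩
    · intro n hn
      simp only [hF, Finset.mem_filter, Finset.mem_range] at hn
      omega
    · intro n hn
      simp only [Finset.mem_filter, Finset.mem_range] at hn
      omega
  have htotal : ((Finset.range M).filter (fun n => ∃ a b : ℕ, n = a * p + b * q)).card + F.card = M := by
    rw [hF]
    rw [Finset.card_filter_add_card_filter_not]
    · exact Finset.card_range M
  omega
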